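/- Let G₁ and G₂ be finite simple graphs on vertex types V₁ and V₂, and let G be their fully connected disjoint union (join): the graph on V₁ ⊕ V₂ in which inl a is adjacent to inl b iff a and b are adjacent in G₁, inr a is adjacent to inr b iff a and b are adjacent in G₂, and inl a is adjacent to inr b for all a ∈ V₁, b ∈ V₂. If G₁ and G₂ are ħ-perfect, then G is ħ-perfect. -/

import Mathlib

open Matrix

/-- A realization of the graph `G` in dimension `d`: a family of Hermitian involutions that
anticommute on edges and commute on non-edges. -/
def IsRealization {V : Type*} (G : SimpleGraph V) (d : ℕ)
    (S : V → Matrix (Fin d) (Fin d) ℂ) : Prop :=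
  (∀ i, (S i).IsHermitian) ∧ (∀ i, S i * S i = 1) ∧
    (∀ i j, G.Adj i j → S i * S j = -(S j * S i)) ∧
    (∀ i j, i ≠ j → ¬G.Adj i j → S i * S j = S j * S i)

/-- The (real) expectation value `ψᴴ A ψ` of a matrix `A` at a vector `ψ`. -/
noncomputable def expectation {d : ℕ} (A : Matrix (Fin d) (Fin d) ℂ) (ψ : Fin d → ℂ) : ℝ :=
  (star ψ ⬝ᵥ (A *ᵥ ψ)).re

/-- The beta value of a realization: supremum over unit vectors of the weighted sum of squared
expectations. -/
noncomputable def betaVal {V : Type*} [Fintype V] {d : ℕ}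
    (S : V → Matrix (Fin d) (Fin d) ℂ) (w : V → ℝ) : ℝ :=
  sSup {r : ℝ | ∃ ψ : Fin d → ℂ, star ψ ⬝ᵥ ψ = 1 ∧
    r = ∑ i, w i * (expectation (S i) ψ) ^ 2}

/-- A finite set of vertices is independent if no two of its members are adjacent. -/
def IsIndepSet {V : Type*} (G : SimpleGraph V) (I : Finset V) : Prop :=
  ∀ a ∈ I, ∀ b ∈ I, ¬G.Adj a b

/-- The weighted independence number. -/
noncomputable def alphaW {V : Type*} [Fintype V] (G : SimpleGraph V) (w : V → ℝ) : ℝ :=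
  sSup {r : ℝ | ∃ I : Finset V, IsIndepSet G I ∧ r = ∑ i ∈ I, w i}

/-- A graph is ħ-perfect if for every realization and every nonnegative weight vector the beta
value equals the weighted independence number. -/
def HbarPerfect {V : Type*} [Fintype V] (G : SimpleGraph V) : Prop :=
  ∀ d : ℕ, 1 ≤ d → ∀ S : V → Matrix (Fin d) (Fin d) ℂ, IsRealization G d S →
    ∀ w : V → ℝ, (∀ i, 0 ≤ w i) → betaVal S w = alphaW G w

namespace HbarJoinAux

variable {d : ℕ}

lemma dot_eq_inner (u v : Fin d → ℂ) :
    star u ⬝ᵥ v = @inner ℂ (EuclideanSpace ℂ (Fin d)) _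
      ((WithLp.equiv 2 (Fin d → ℂ)).symm u) ((WithLp.equiv 2 (Fin d → ℂ)).symm v) :=
  dotProduct_comm _ _

lemma dot_cs (u v : Fin d → ℂ) :
    ‖star u ⬝ᵥ v‖ ^ 2 ≤ (star u ⬝ᵥ u).re * (star v ⬝ᵥ v).re := by
  rw [dot_eq_inner, dot_eq_inner, dot_eq_inner]
  set U := (WithLp.equiv 2 (Fin d → ℂ)).symm u
  set V := (WithLp.equiv 2 (Fin d → ℂ)).symm v
  have h1 : ‖(inner ℂ U V : ℂ)‖ ≤ ‖U‖ * ‖V‖ := norm_inner_le_norm U V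
  have h2 : ((inner ℂ U U : ℂ)).re = ‖U‖ ^ 2 := @inner_self_eq_norm_sq ℂ _ _ _ _ _
  have h3 : ((inner ℂ V V : ℂ)).re = ‖V‖ ^ 2 := @inner_self_eq_norm_sq ℂ _ _ _ _ _
  rw [h2, h3]
  calc ‖(inner ℂ U V : ℂ)‖ ^ 2 ≤ (‖U‖ * ‖V‖) ^ 2 := pow_le_pow_left₀ (norm_nonneg _) h1 2
    _ = ‖U‖ ^ 2 * ‖V‖ ^ 2 := by ring

lemma star_dot_mulVec_self (A : Matrix (Fin d) (Fin d) ℂ) (ψ : Fin d → ℂ) :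
    star (A *ᵥ ψ) ⬝ᵥ (A *ᵥ ψ) = star ψ ⬝ᵥ ((Aᴴ * A) *ᵥ ψ) := by
  rw [star_mulVec, dotProduct_mulVec, dotProduct_mulVec, vecMul_vecMul]

/-- Cauchy-Schwarz consequence: `(Re ψᴴAψ)² ≤ Re ψᴴAᴴAψ` for a unit vector `ψ`. -/
lemma expectation_sq_le (A : Matrix (Fin d) (Fin d) ℂ) (ψ : Fin d → ℂ)
    (hψ : star ψ ⬝ᵥ ψ = 1) :
    (expectation A ψ) ^ 2 ≤ (star ψ ⬝ᵥ ((Aᴴ * A) *ᵥ ψ)).re := by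
  have h0 : (expectation A ψ) ^ 2 ≤ ‖star ψ ⬝ᵥ (A *ᵥ ψ)‖ ^ 2 := by
    rw [expectation, ← sq_abs]
    refine pow_le_pow_left₀ (abs_nonneg _) ?_ 2
    exact Complex.abs_re_le_norm _
  calc (expectation A ψ) ^ 2 ≤ ‖star ψ ⬝ᵥ (A *ᵥ ψ)‖ ^ 2 := h0
    _ ≤ (star ψ ⬝ᵥ ψ).re * (star (A *ᵥ ψ) ⬝ᵥ (A *ᵥ ψ)).re := dot_cs ψ (A *ᵥ ψ)
    _ = (star ψ ⬝ᵥ ((Aᴴ * A) *ᵥ ψ)).re := by rw [hψ, star_dot_mulVec_self]; simp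

/-- For a Hermitian involution, squared expectations are at most 1. -/
lemma exp_sq_le_one {A : Matrix (Fin d) (Fin d) ℂ} (hA : A.IsHermitian) (hInv : A * A = 1)
    {ψ : Fin d → ℂ} (hψ : star ψ ⬝ᵥ ψ = 1) : (expectation A ψ) ^ 2 ≤ 1 := by
  have := expectation_sq_le A ψ hψ
  rwa [hA.eq, hInv, one_mulVec, hψ] at this

lemma exists_unit_vector (hd : 1 ≤ d) : ∃ ψ : Fin d → ℂ, star ψ ⬝ᵥ ψ = 1 := by
  let ψ₀ : Fin d → ℂ := Pi.single ⟨0, hd⟩ 1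
  have hstar : star ψ₀ = ψ₀ := by
    funext j
    rw [Pi.star_apply]
    by_cases h : j = (⟨0, hd⟩ : Fin d)
    · subst h; simp [ψ₀]
    · simp [ψ₀, Pi.single_eq_of_ne h]
  refine ⟨ψ₀, ?_⟩
  rw [hstar]
  show (Pi.single (⟨0, hd⟩ : Fin d) (1:ℂ) : Fin d → ℂ) ⬝ᵥ ψ₀ = 1
  rw [single_dotProduct, one_mul]
  exact Pi.single_eq_same _ _

section beta

variable {V : Type*} [Fintype V]

lemma betaSet_bddAbove (S : V → Matrix (Fin d) (Fin d) ℂ) {G : SimpleGraph V}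
    (hS : IsRealization G d S) {w : V → ℝ} (hw : ∀ i, 0 ≤ w i) :
    BddAbove {r : ℝ | ∃ ψ : Fin d → ℂ, star ψ ⬝ᵥ ψ = 1 ∧
      r = ∑ i, w i * (expectation (S i) ψ) ^ 2} := by
  refine ⟨∑ i, w i, ?_⟩
  rintro r ⟨ψ, hψ, rfl⟩
  apply Finset.sum_le_sum
  intro i _
  have h1 : (expectation (S i) ψ) ^ 2 ≤ 1 := exp_sq_le_one (hS.1 i) (hS.2.1 i) hψ
  calc w i * (expectation (S i) ψ) ^ 2 ≤ w i * 1 :=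
        mul_le_mul_of_nonneg_left h1 (hw i)
    _ = w i := mul_one _

lemma betaSet_nonempty (hd : 1 ≤ d) (S : V → Matrix (Fin d) (Fin d) ℂ) (w : V → ℝ) :
    Set.Nonempty {r : ℝ | ∃ ψ : Fin d → ℂ, star ψ ⬝ᵥ ψ = 1 ∧
      r = ∑ i, w i * (expectation (S i) ψ) ^ 2} := by
  obtain ⟨ψ, hψ⟩ := exists_unit_vector hd
  exact ⟨_, ψ, hψ, rfl⟩

/-- for an ħ-perfect graph, any realization value is at most the independence number. -/
lemma sum_le_alpha {G : SimpleGraph V} (h : HbarPerfect G) (hd : 1 ≤ d)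
    {S : V → Matrix (Fin d) (Fin d) ℂ} (hS : IsRealization G d S)
    {w : V → ℝ} (hw : ∀ i, 0 ≤ w i) {ψ : Fin d → ℂ} (hψ : star ψ ⬝ᵥ ψ = 1) :
    ∑ i, w i * (expectation (S i) ψ) ^ 2 ≤ alphaW G w := by
  rw [← h d hd S hS w hw]
  exact le_csSup (betaSet_bddAbove S hS hw) ⟨ψ, hψ, rfl⟩

end beta

section alpha

variable {V : Type*} [Fintype V]

lemma alphaSet_finite (G : SimpleGraph V) (w : V → ℝ) :
    Set.Finite {r : ℝ | ∃ I : Finset V, IsIndepSet G I ∧ r = ∑ i ∈ I, w i} := by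
  classical
  apply Set.Finite.subset (Set.finite_range (fun I : Finset V => ∑ i ∈ I, w i))
  rintro r ⟨I, _, rfl⟩
  exact ⟨I, rfl⟩

lemma alphaSet_nonempty (G : SimpleGraph V) (w : V → ℝ) :
    Set.Nonempty {r : ℝ | ∃ I : Finset V, IsIndepSet G I ∧ r = ∑ i ∈ I, w i} :=
  ⟨0, ∅, fun a ha => absurd ha (Finset.notMem_empty a), by simp⟩

lemma indep_sum_le_alphaW {G : SimpleGraph V} {I : Finset V} (hI : IsIndepSet G I)
    (w : V → ℝ) : ∑ i ∈ I, w i ≤ alphaW G w :=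
  le_csSup ((alphaSet_finite G w).bddAbove) ⟨I, hI, rfl⟩

lemma single_le_alphaW (G : SimpleGraph V) (w : V → ℝ) (j : V) : w j ≤ alphaW G w := by
  have hI : IsIndepSet G {j} := by
    intro a ha b hb
    rw [Finset.mem_singleton] at ha hb
    subst ha; subst hb
    exact G.irrefl
  simpa using indep_sum_le_alphaW hI w

lemma alphaW_nonneg (G : SimpleGraph V) (w : V → ℝ) : 0 ≤ alphaW G w := by
  have := indep_sum_le_alphaW (G := G) (I := ∅)
    (fun a ha => absurd ha (Finset.notMem_empty a)) w
  simpa using this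

end alpha

section alphajoin

variable {V₁ V₂ : Type*} [Fintype V₁] [Fintype V₂]

lemma alphaW_join (G₁ : SimpleGraph V₁) (G₂ : SimpleGraph V₂) (G : SimpleGraph (V₁ ⊕ V₂))
    (hll : ∀ a b, G.Adj (Sum.inl a) (Sum.inl b) ↔ G₁.Adj a b)
    (hrr : ∀ a b, G.Adj (Sum.inr a) (Sum.inr b) ↔ G₂.Adj a b)
    (hlr : ∀ a b, G.Adj (Sum.inl a) (Sum.inr b)) (w : V₁ ⊕ V₂ → ℝ) :
    alphaW G w = max (alphaW G₁ (w ∘ Sum.inl)) (alphaW G₂ (w ∘ Sum.inr)) := by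
  classical
  have hset : {r : ℝ | ∃ I : Finset (V₁ ⊕ V₂), IsIndepSet G I ∧ r = ∑ i ∈ I, w i}
      = {r : ℝ | ∃ I : Finset V₁, IsIndepSet G₁ I ∧ r = ∑ i ∈ I, (w ∘ Sum.inl) i}
        ∪ {r : ℝ | ∃ I : Finset V₂, IsIndepSet G₂ I ∧ r = ∑ i ∈ I, (w ∘ Sum.inr) i} := by
    ext r
    constructor
    · rintro ⟨I, hI, rfl⟩
      by_cases hL : ∀ x ∈ I, ∃ a, x = Sum.inl a
      · left
        refine ⟨I.preimage Sum.inl (Sum.inl_injective.injOn), ?_, ?_⟩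
        · intro a ha b hb
          rw [Finset.mem_preimage] at ha hb
          exact fun hadj => hI _ ha _ hb ((hll a b).mpr hadj)
        · refine (Finset.sum_preimage Sum.inl I _ (fun x => w x) ?_).symm
          intro x hx hxr
          obtain ⟨a, rfl⟩ := hL x hx
          exact absurd ⟨a, rfl⟩ hxr
      · right
        push_neg at hL
        obtain ⟨x₀, hx₀, hx₀r⟩ := hL
        obtain ⟨b₀, rfl⟩ : ∃ b, x₀ = Sum.inr b := by
          cases x₀ with
          | inl a => exact absurd rfl (hx₀r a)
          | inr b => exact ⟨b, rfl⟩
        have hR : ∀ x ∈ I, ∃ b, x = Sum.inr b := by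
          intro x hx
          cases x with
          | inl a => exact absurd (hlr a b₀) (hI _ hx _ hx₀)
          | inr b => exact ⟨b, rfl⟩
        refine ⟨I.preimage Sum.inr (Sum.inr_injective.injOn), ?_, ?_⟩
        · intro a ha b hb
          rw [Finset.mem_preimage] at ha hb
          exact fun hadj => hI _ ha _ hb ((hrr a b).mpr hadj)
        · refine (Finset.sum_preimage Sum.inr I _ (fun x => w x) ?_).symm
          intro x hx hxr
          obtain ⟨b, rfl⟩ := hR x hx
          exact absurd ⟨b, rfl⟩ hxr
    · rintro (⟨I, hI, rfl⟩ | ⟨I, hI, rfl⟩)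
      · refine ⟨I.map ⟨Sum.inl, Sum.inl_injective⟩, ?_, ?_⟩
        · intro a ha b hb
          rw [Finset.mem_map] at ha hb
          obtain ⟨a', ha', rfl⟩ := ha
          obtain ⟨b', hb', rfl⟩ := hb
          exact fun hadj => hI _ ha' _ hb' ((hll a' b').mp hadj)
        · rw [Finset.sum_map]
          rfl
      · refine ⟨I.map ⟨Sum.inr, Sum.inr_injective⟩, ?_, ?_⟩
        · intro a ha b hb
          rw [Finset.mem_map] at ha hb
          obtain ⟨a', ha', rfl⟩ := ha
          obtain ⟨b', hb', rfl⟩ := hb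
          exact fun hadj => hI _ ha' _ hb' ((hrr a' b').mp hadj)
        · rw [Finset.sum_map]
          rfl
  rw [alphaW, hset, csSup_union ((alphaSet_finite G₁ _).bddAbove) (alphaSet_nonempty G₁ _)
    ((alphaSet_finite G₂ _).bddAbove) (alphaSet_nonempty G₂ _)]
  rfl

end alphajoin

section spectral

/-- If all (real) expectations of a Hermitian matrix `L` at unit vectors have square at most
`c`, then `ψᴴ L² ψ ≤ c` for every unit vector `ψ`. -/
lemma herm_sq_exp_le {L : Matrix (Fin d) (Fin d) ℂ} (hL : L.IsHermitian) {c : ℝ}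
    (hc : ∀ φ : Fin d → ℂ, star φ ⬝ᵥ φ = 1 → (expectation L φ) ^ 2 ≤ c)
    {ψ : Fin d → ℂ} (hψ : star ψ ⬝ᵥ ψ = 1) :
    (star ψ ⬝ᵥ ((L * L) *ᵥ ψ)).re ≤ c := by
  classical
  set U : Matrix (Fin d) (Fin d) ℂ := (hL.eigenvectorUnitary : Matrix (Fin d) (Fin d) ℂ) with hU
  have hUU : U * star U = 1 := (Matrix.mem_unitaryGroup_iff).mp hL.eigenvectorUnitary.2
  have hUU' : star U * U = 1 := (Matrix.mem_unitaryGroup_iff').mp hL.eigenvectorUnitary.2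
  -- eigenvalue bound
  have heig : ∀ k, (hL.eigenvalues k) ^ 2 ≤ c := by
    intro k
    have hunit : star ⇑(hL.eigenvectorBasis k) ⬝ᵥ ⇑(hL.eigenvectorBasis k) = 1 := by
      have h1 : (inner ℂ (hL.eigenvectorBasis k) (hL.eigenvectorBasis k) : ℂ)
          = (‖hL.eigenvectorBasis k‖ : ℂ) ^ 2 := by
        exact_mod_cast @inner_self_eq_norm_sq_to_K ℂ _ _ _ _ (hL.eigenvectorBasis k)
      rw [EuclideanSpace.inner_eq_star_dotProduct, dotProduct_comm] at h1
      rw [h1, hL.eigenvectorBasis.orthonormal.1 k]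
      norm_num
    have hexp : expectation L ⇑(hL.eigenvectorBasis k) = hL.eigenvalues k :=
      (hL.eigenvalues_eq k).symm
    have := hc _ hunit
    rwa [hexp] at this
  -- compute the quadratic form in the eigenbasis
  set μ : Fin d → ℝ := hL.eigenvalues with hμ
  set D : Matrix (Fin d) (Fin d) ℂ := diagonal (fun k => (μ k : ℂ)) with hD
  have hspec : L = U * D * star U := hL.spectral_theorem
  have hLL : L * L = U * diagonal (fun k => ((μ k : ℂ) * (μ k : ℂ))) * star U := by
    rw [hspec]
    calc U * D * star U * (U * D * star U) = U * D * (star U * U) * D * star U := by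
          noncomm_ring
      _ = U * (D * D) * star U := by rw [hUU']; noncomm_ring
      _ = U * diagonal (fun k => ((μ k : ℂ) * (μ k : ℂ))) * star U := by
          rw [hD, diagonal_mul_diagonal]
  set y : Fin d → ℂ := star U *ᵥ ψ with hy
  have hsy : star y = star ψ ᵥ* U := by
    rw [hy, star_mulVec, star_eq_conjTranspose, conjTranspose_conjTranspose]
  have hquad : star ψ ⬝ᵥ ((L * L) *ᵥ ψ) = star y ⬝ᵥ (diagonal (fun k => ((μ k : ℂ) * (μ k : ℂ))) *ᵥ y) := by
    rw [hLL, ← mulVec_mulVec, ← mulVec_mulVec, dotProduct_mulVec, ← hsy, hy]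
  have hnorm : star y ⬝ᵥ y = 1 := by
    rw [hsy, hy, ← dotProduct_mulVec, mulVec_mulVec, hUU, one_mulVec, hψ]
  have hsq : ∀ k, star y k * y k = (Complex.normSq (y k) : ℂ) := by
    intro k
    rw [Pi.star_apply, Complex.star_def]
    exact Complex.normSq_eq_conj_mul_self.symm
  have hterm : ∀ k, (star y k * (((μ k : ℂ) * (μ k : ℂ)) * y k)).re
      = (μ k)^2 * Complex.normSq (y k) := by
    intro k
    have h2 : star y k * (((μ k : ℂ) * (μ k : ℂ)) * y k)
        = (((μ k)^2 * Complex.normSq (y k) : ℝ) : ℂ) := by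
      calc star y k * (((μ k : ℂ) * (μ k : ℂ)) * y k)
          = ((μ k : ℂ) * (μ k : ℂ)) * (star y k * y k) := by ring
        _ = ((μ k : ℂ) * (μ k : ℂ)) * (Complex.normSq (y k) : ℂ) := by rw [hsq k]
        _ = (((μ k)^2 * Complex.normSq (y k) : ℝ) : ℂ) := by push_cast; ring
    rw [h2, Complex.ofReal_re]
  have hterm1 : ∀ k, (star y k * y k).re = Complex.normSq (y k) := by
    intro k
    rw [hsq k, Complex.ofReal_re]
  have hnorm' : ∑ k, Complex.normSq (y k) = 1 := by
    have : (star y ⬝ᵥ y).re = 1 := by rw [hnorm]; simp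
    rw [dotProduct, Complex.re_sum] at this
    rw [← this]
    exact Finset.sum_congr rfl fun k _ => (hterm1 k).symm
  rw [hquad, dotProduct, Complex.re_sum]
  have hμv : ∀ k, (star y k * ((diagonal (fun k => ((μ k : ℂ) * (μ k : ℂ)))) *ᵥ y) k).re
      = (μ k)^2 * Complex.normSq (y k) := by
    intro k
    rw [mulVec_diagonal]
    exact hterm k
  calc ∑ k, (star y k * ((diagonal fun k => (μ k : ℂ) * (μ k : ℂ)) *ᵥ y) k).re
      = ∑ k, (μ k)^2 * Complex.normSq (y k) := Finset.sum_congr rfl fun k _ => hμv k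
    _ ≤ ∑ k, c * Complex.normSq (y k) := by
        apply Finset.sum_le_sum
        intro k _
        exact mul_le_mul_of_nonneg_right (heig k) (Complex.normSq_nonneg _)
    _ = c * ∑ k, Complex.normSq (y k) := by rw [Finset.mul_sum]
    _ = c := by rw [hnorm', mul_one]

end spectral

section sums

variable {ι : Type*} [Fintype ι]

lemma mulVec_sum' (s : Finset ι) (M : ι → Matrix (Fin d) (Fin d) ℂ) (v : Fin d → ℂ) :
    (∑ i ∈ s, M i) *ᵥ v = ∑ i ∈ s, (M i *ᵥ v) := by
  classical
  induction s using Finset.induction_on with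
  | empty => simp [Matrix.zero_mulVec]
  | insert _ _ ha ih =>
      rw [Finset.sum_insert ha, Finset.sum_insert ha, Matrix.add_mulVec, ih]

lemma dotProduct_sum' (s : Finset ι) (u : Fin d → ℂ) (v : ι → Fin d → ℂ) :
    u ⬝ᵥ (∑ i ∈ s, v i) = ∑ i ∈ s, u ⬝ᵥ v i := by
  classical
  induction s using Finset.induction_on with
  | empty => simp
  | insert _ _ ha ih =>
      rw [Finset.sum_insert ha, Finset.sum_insert ha, dotProduct_add, ih]

lemma expectation_add (A B : Matrix (Fin d) (Fin d) ℂ) (ψ : Fin d → ℂ) :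
    expectation (A + B) ψ = expectation A ψ + expectation B ψ := by
  rw [expectation, expectation, expectation, Matrix.add_mulVec, dotProduct_add, Complex.add_re]

lemma expectation_smul (c : ℝ) (A : Matrix (Fin d) (Fin d) ℂ) (ψ : Fin d → ℂ) :
    expectation ((c : ℂ) • A) ψ = c * expectation A ψ := by
  rw [expectation, expectation, smul_mulVec, dotProduct_smul, smul_eq_mul,
    Complex.re_ofReal_mul]

lemma expectation_sum (c : ι → ℝ) (M : ι → Matrix (Fin d) (Fin d) ℂ) (φ : Fin d → ℂ) :
    expectation (∑ i, ((c i : ℝ) : ℂ) • M i) φ = ∑ i, c i * expectation (M i) φ := by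
  rw [expectation, mulVec_sum', dotProduct_sum', Complex.re_sum]
  exact Finset.sum_congr rfl fun i _ => by
    rw [smul_mulVec, dotProduct_smul, smul_eq_mul, Complex.re_ofReal_mul, expectation]

lemma isHermitian_sum_smul (c : ι → ℝ) (M : ι → Matrix (Fin d) (Fin d) ℂ)
    (hM : ∀ i, (M i).IsHermitian) : (∑ i, ((c i : ℝ) : ℂ) • M i).IsHermitian := by
  have : (∑ i, ((c i : ℝ) : ℂ) • M i)ᴴ = ∑ i, ((c i : ℝ) : ℂ) • M i := by
    rw [Matrix.conjTranspose_sum]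
    refine Finset.sum_congr rfl fun i _ => ?_
    rw [Matrix.conjTranspose_smul, (hM i).eq, Complex.star_def, Complex.conj_ofReal]
  exact this

lemma sum_smul_anticomm {κ : Type*} [Fintype κ] (c : ι → ℝ) (e : κ → ℝ)
    (A : ι → Matrix (Fin d) (Fin d) ℂ) (B : κ → Matrix (Fin d) (Fin d) ℂ)
    (h : ∀ i j, A i * B j = -(B j * A i)) :
    (∑ i, ((c i : ℝ) : ℂ) • A i) * (∑ j, ((e j : ℝ) : ℂ) • B j)
      = -((∑ j, ((e j : ℝ) : ℂ) • B j) * (∑ i, ((c i : ℝ) : ℂ) • A i)) := by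
  have hterm : ∀ i j, (((c i : ℝ) : ℂ) • A i) * (((e j : ℝ) : ℂ) • B j)
      = -((((e j : ℝ) : ℂ) • B j) * (((c i : ℝ) : ℂ) • A i)) := by
    intro i j
    rw [smul_mul_assoc, mul_smul_comm, h i j, smul_mul_assoc, mul_smul_comm,
      smul_neg, smul_neg, smul_comm]
  calc (∑ i, ((c i : ℝ) : ℂ) • A i) * (∑ j, ((e j : ℝ) : ℂ) • B j)
      = ∑ i, ∑ j, (((c i : ℝ) : ℂ) • A i) * (((e j : ℝ) : ℂ) • B j) :=
        Finset.sum_mul_sum _ _ _ _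
    _ = ∑ i, ∑ j, -((((e j : ℝ) : ℂ) • B j) * (((c i : ℝ) : ℂ) • A i)) :=
        Finset.sum_congr rfl fun i _ => Finset.sum_congr rfl fun j _ => hterm i j
    _ = -(∑ j, ∑ i, ((((e j : ℝ) : ℂ) • B j) * (((c i : ℝ) : ℂ) • A i))) := by
        rw [Finset.sum_comm]
        rw [← Finset.sum_neg_distrib]
        exact Finset.sum_congr rfl fun j _ => by rw [← Finset.sum_neg_distrib]
    _ = -((∑ j, ((e j : ℝ) : ℂ) • B j) * (∑ i, ((c i : ℝ) : ℂ) • A i)) := by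
        rw [Finset.sum_mul_sum]

end sums

section main

variable {V₁ V₂ : Type*} [Fintype V₁] [Fintype V₂]

lemma isRealization_inl {G₁ : SimpleGraph V₁}
    {G : SimpleGraph (V₁ ⊕ V₂)}
    (hll : ∀ a b, G.Adj (Sum.inl a) (Sum.inl b) ↔ G₁.Adj a b)
    {S : (V₁ ⊕ V₂) → Matrix (Fin d) (Fin d) ℂ} (hS : IsRealization G d S) :
    IsRealization G₁ d (fun i => S (Sum.inl i)) :=
  ⟨fun i => hS.1 _, fun i => hS.2.1 _,
   fun i j hadj => hS.2.2.1 _ _ ((hll i j).mpr hadj),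
   fun i j hne hnadj => hS.2.2.2 _ _ (fun hc => hne (Sum.inl_injective hc))
     (fun hc => hnadj ((hll i j).mp hc))⟩

lemma isRealization_inr {G₂ : SimpleGraph V₂}
    {G : SimpleGraph (V₁ ⊕ V₂)}
    (hrr : ∀ a b, G.Adj (Sum.inr a) (Sum.inr b) ↔ G₂.Adj a b)
    {S : (V₁ ⊕ V₂) → Matrix (Fin d) (Fin d) ℂ} (hS : IsRealization G d S) :
    IsRealization G₂ d (fun j => S (Sum.inr j)) :=
  ⟨fun i => hS.1 _, fun i => hS.2.1 _,
   fun i j hadj => hS.2.2.1 _ _ ((hrr i j).mpr hadj),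
   fun i j hne hnadj => hS.2.2.2 _ _ (fun hc => hne (Sum.inr_injective hc))
     (fun hc => hnadj ((hrr i j).mp hc))⟩

lemma main_bound {G₁ : SimpleGraph V₁} {G₂ : SimpleGraph V₂} {G : SimpleGraph (V₁ ⊕ V₂)}
    (hll : ∀ a b, G.Adj (Sum.inl a) (Sum.inl b) ↔ G₁.Adj a b)
    (hrr : ∀ a b, G.Adj (Sum.inr a) (Sum.inr b) ↔ G₂.Adj a b)
    (hlr : ∀ a b, G.Adj (Sum.inl a) (Sum.inr b))
    (h₁ : HbarPerfect G₁) (h₂ : HbarPerfect G₂)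
    (hd : 1 ≤ d) {S : (V₁ ⊕ V₂) → Matrix (Fin d) (Fin d) ℂ} (hS : IsRealization G d S)
    {w : V₁ ⊕ V₂ → ℝ} (hw : ∀ v, 0 ≤ w v) {ψ : Fin d → ℂ} (hψ : star ψ ⬝ᵥ ψ = 1) :
    ∑ v, w v * (expectation (S v) ψ) ^ 2
      ≤ max (alphaW G₁ (w ∘ Sum.inl)) (alphaW G₂ (w ∘ Sum.inr)) := by
  classical
  have hS₁ := isRealization_inl hll hS
  have hS₂ := isRealization_inr hrr hS
  set w₁ : V₁ → ℝ := w ∘ Sum.inl with hw₁def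
  set w₂ : V₂ → ℝ := w ∘ Sum.inr with hw₂def
  have hw₁ : ∀ i, 0 ≤ w₁ i := fun i => hw _
  have hw₂ : ∀ j, 0 ≤ w₂ j := fun j => hw _
  set α₁ : ℝ := alphaW G₁ w₁ with hα₁def
  set α₂ : ℝ := alphaW G₂ w₂ with hα₂def
  set F₁ : ℝ := ∑ i, w₁ i * (expectation (S (Sum.inl i)) ψ) ^ 2 with hF₁def
  set F₂ : ℝ := ∑ j, w₂ j * (expectation (S (Sum.inr j)) ψ) ^ 2 with hF₂def
  have hsum : ∑ v, w v * (expectation (S v) ψ) ^ 2 = F₁ + F₂ :=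
    Fintype.sum_sum_type _
  rw [hsum]
  have hF₁nonneg : 0 ≤ F₁ :=
    Finset.sum_nonneg fun i _ => mul_nonneg (hw₁ i) (sq_nonneg _)
  have hF₂nonneg : 0 ≤ F₂ :=
    Finset.sum_nonneg fun j _ => mul_nonneg (hw₂ j) (sq_nonneg _)
  have hF₁le : F₁ ≤ α₁ := sum_le_alpha h₁ hd hS₁ hw₁ hψ
  have hF₂le : F₂ ≤ α₂ := sum_le_alpha h₂ hd hS₂ hw₂ hψ
  rcases eq_or_lt_of_le hF₁nonneg with hF₁0 | hF₁pos
  · rw [← hF₁0, zero_add]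
    exact le_trans hF₂le (le_max_right _ _)
  rcases eq_or_lt_of_le hF₂nonneg with hF₂0 | hF₂pos
  · rw [← hF₂0, add_zero]
    exact le_trans hF₁le (le_max_left _ _)
  have hα₁pos : 0 < α₁ := by
    obtain ⟨i, hi⟩ : ∃ i, 0 < w₁ i * (expectation (S (Sum.inl i)) ψ) ^ 2 := by
      by_contra hcon
      push_neg at hcon
      have : F₁ ≤ 0 := Finset.sum_nonpos fun i _ => hcon i
      linarith
    have hwi : 0 < w₁ i := by
      rcases lt_or_ge 0 (w₁ i) with h | h
      · exact h
      · nlinarith [sq_nonneg (expectation (S (Sum.inl i)) ψ)]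
    exact lt_of_lt_of_le hwi (single_le_alphaW G₁ w₁ i)
  have hα₂pos : 0 < α₂ := by
    obtain ⟨j, hj⟩ : ∃ j, 0 < w₂ j * (expectation (S (Sum.inr j)) ψ) ^ 2 := by
      by_contra hcon
      push_neg at hcon
      have : F₂ ≤ 0 := Finset.sum_nonpos fun j _ => hcon j
      linarith
    have hwj : 0 < w₂ j := by
      rcases lt_or_ge 0 (w₂ j) with h | h
      · exact h
      · nlinarith [sq_nonneg (expectation (S (Sum.inr j)) ψ)]
    exact lt_of_lt_of_le hwj (single_le_alphaW G₂ w₂ j)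
  -- the operators L and K
  set cc : V₁ → ℝ := fun i => w₁ i * expectation (S (Sum.inl i)) ψ with hccdef
  set ee : V₂ → ℝ := fun j => w₂ j * expectation (S (Sum.inr j)) ψ with heedef
  set L : Matrix (Fin d) (Fin d) ℂ := ∑ i, ((cc i : ℝ) : ℂ) • S (Sum.inl i) with hLdef
  set K : Matrix (Fin d) (Fin d) ℂ := ∑ j, ((ee j : ℝ) : ℂ) • S (Sum.inr j) with hKdef
  have hLherm : L.IsHermitian := isHermitian_sum_smul cc _ (fun i => hS₁.1 i)
  have hKherm : K.IsHermitian := isHermitian_sum_smul ee _ (fun j => hS₂.1 j)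
  -- Cauchy-Schwarz bound for expectations of L at arbitrary unit vectors
  have hCSgen : ∀ (u : V₁ → ℝ) (t s : V₁ → ℝ),
      (∀ i, 0 ≤ u i) →
      (∑ i, (u i * t i) * s i) ^ 2 ≤ (∑ i, u i * t i ^ 2) * (∑ i, u i * s i ^ 2) := by
    intro u t s hu
    have h := Finset.sum_mul_sq_le_sq_mul_sq Finset.univ
      (fun i => Real.sqrt (u i) * t i) (fun i => Real.sqrt (u i) * s i)
    have h1 : ∀ i : V₁, (Real.sqrt (u i) * t i) * (Real.sqrt (u i) * s i)
        = (u i * t i) * s i := by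
      intro i
      have hss : Real.sqrt (u i) * Real.sqrt (u i) = u i := Real.mul_self_sqrt (hu i)
      rw [show (Real.sqrt (u i) * t i) * (Real.sqrt (u i) * s i)
          = (Real.sqrt (u i) * Real.sqrt (u i)) * (t i * s i) from by ring, hss]
      ring
    have h2 : ∀ i : V₁, (Real.sqrt (u i) * t i) ^ 2 = u i * t i ^ 2 := by
      intro i
      have hss : Real.sqrt (u i) * Real.sqrt (u i) = u i := Real.mul_self_sqrt (hu i)
      rw [mul_pow, sq (Real.sqrt (u i)), hss]
    have h3 : ∀ i : V₁, (Real.sqrt (u i) * s i) ^ 2 = u i * s i ^ 2 := by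
      intro i
      have hss : Real.sqrt (u i) * Real.sqrt (u i) = u i := Real.mul_self_sqrt (hu i)
      rw [mul_pow, sq (Real.sqrt (u i)), hss]
    calc (∑ i, (u i * t i) * s i) ^ 2
        = (∑ i, (Real.sqrt (u i) * t i) * (Real.sqrt (u i) * s i)) ^ 2 := by
          rw [Finset.sum_congr rfl fun i _ => (h1 i).symm]
      _ ≤ (∑ i, (Real.sqrt (u i) * t i) ^ 2) * (∑ i, (Real.sqrt (u i) * s i) ^ 2) := h
      _ = (∑ i, u i * t i ^ 2) * (∑ i, u i * s i ^ 2) := by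
          rw [Finset.sum_congr rfl fun i _ => h2 i, Finset.sum_congr rfl fun i _ => h3 i]
  have hCSgen₂ : ∀ (u : V₂ → ℝ) (t s : V₂ → ℝ),
      (∀ j, 0 ≤ u j) →
      (∑ j, (u j * t j) * s j) ^ 2 ≤ (∑ j, u j * t j ^ 2) * (∑ j, u j * s j ^ 2) := by
    intro u t s hu
    have h := Finset.sum_mul_sq_le_sq_mul_sq Finset.univ
      (fun j => Real.sqrt (u j) * t j) (fun j => Real.sqrt (u j) * s j)
    have h1 : ∀ j : V₂, (Real.sqrt (u j) * t j) * (Real.sqrt (u j) * s j)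
        = (u j * t j) * s j := by
      intro j
      have hss : Real.sqrt (u j) * Real.sqrt (u j) = u j := Real.mul_self_sqrt (hu j)
      rw [show (Real.sqrt (u j) * t j) * (Real.sqrt (u j) * s j)
          = (Real.sqrt (u j) * Real.sqrt (u j)) * (t j * s j) from by ring, hss]
      ring
    have h2 : ∀ j : V₂, (Real.sqrt (u j) * t j) ^ 2 = u j * t j ^ 2 := by
      intro j
      have hss : Real.sqrt (u j) * Real.sqrt (u j) = u j := Real.mul_self_sqrt (hu j)
      rw [mul_pow, sq (Real.sqrt (u j)), hss]
    have h3 : ∀ j : V₂, (Real.sqrt (u j) * s j) ^ 2 = u j * s j ^ 2 := by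
      intro j
      have hss : Real.sqrt (u j) * Real.sqrt (u j) = u j := Real.mul_self_sqrt (hu j)
      rw [mul_pow, sq (Real.sqrt (u j)), hss]
    calc (∑ j, (u j * t j) * s j) ^ 2
        = (∑ j, (Real.sqrt (u j) * t j) * (Real.sqrt (u j) * s j)) ^ 2 := by
          rw [Finset.sum_congr rfl fun j _ => (h1 j).symm]
      _ ≤ (∑ j, (Real.sqrt (u j) * t j) ^ 2) * (∑ j, (Real.sqrt (u j) * s j) ^ 2) := h
      _ = (∑ j, u j * t j ^ 2) * (∑ j, u j * s j ^ 2) := by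
          rw [Finset.sum_congr rfl fun j _ => h2 j, Finset.sum_congr rfl fun j _ => h3 j]
  have hLbound : ∀ φ : Fin d → ℂ, star φ ⬝ᵥ φ = 1 → (expectation L φ) ^ 2 ≤ F₁ * α₁ := by
    intro φ hφ
    rw [hLdef, expectation_sum]
    have hcs := hCSgen w₁ (fun i => expectation (S (Sum.inl i)) ψ)
      (fun i => expectation (S (Sum.inl i)) φ) hw₁
    have hβφ : ∑ i, w₁ i * (expectation (S (Sum.inl i)) φ) ^ 2 ≤ α₁ :=
      sum_le_alpha h₁ hd hS₁ hw₁ hφ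
    have hβφ0 : 0 ≤ ∑ i, w₁ i * (expectation (S (Sum.inl i)) φ) ^ 2 :=
      Finset.sum_nonneg fun i _ => mul_nonneg (hw₁ i) (sq_nonneg _)
    calc (∑ i, cc i * expectation (S (Sum.inl i)) φ) ^ 2
        ≤ F₁ * (∑ i, w₁ i * (expectation (S (Sum.inl i)) φ) ^ 2) := hcs
      _ ≤ F₁ * α₁ := mul_le_mul_of_nonneg_left hβφ (le_of_lt hF₁pos)
  have hKbound : ∀ φ : Fin d → ℂ, star φ ⬝ᵥ φ = 1 → (expectation K φ) ^ 2 ≤ F₂ * α₂ := by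
    intro φ hφ
    rw [hKdef, expectation_sum]
    have hcs := hCSgen₂ w₂ (fun j => expectation (S (Sum.inr j)) ψ)
      (fun j => expectation (S (Sum.inr j)) φ) hw₂
    have hβφ : ∑ j, w₂ j * (expectation (S (Sum.inr j)) φ) ^ 2 ≤ α₂ :=
      sum_le_alpha h₂ hd hS₂ hw₂ hφ
    calc (∑ j, ee j * expectation (S (Sum.inr j)) φ) ^ 2
        ≤ F₂ * (∑ j, w₂ j * (expectation (S (Sum.inr j)) φ) ^ 2) := hcs
      _ ≤ F₂ * α₂ := mul_le_mul_of_nonneg_left hβφ (le_of_lt hF₂pos)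
  have hL2 : (star ψ ⬝ᵥ ((L * L) *ᵥ ψ)).re ≤ F₁ * α₁ := herm_sq_exp_le hLherm hLbound hψ
  have hK2 : (star ψ ⬝ᵥ ((K * K) *ᵥ ψ)).re ≤ F₂ * α₂ := herm_sq_exp_le hKherm hKbound hψ
  -- anticommutation of L and K
  have hanti : L * K = -(K * L) :=
    sum_smul_anticomm cc ee _ _ (fun i j => hS.2.2.1 _ _ (hlr i j))
  -- expectations of L and K at ψ
  have hexpL : expectation L ψ = F₁ := by
    rw [hLdef, expectation_sum]
    refine Finset.sum_congr rfl fun i _ => ?_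
    rw [hccdef]
    ring
  have hexpK : expectation K ψ = F₂ := by
    rw [hKdef, expectation_sum]
    refine Finset.sum_congr rfl fun j _ => ?_
    rw [heedef]
    ring
  -- the operator N and the quadratic estimate
  set a : ℝ := α₁⁻¹ with hadef
  set b : ℝ := α₂⁻¹ with hbdef
  have hapos : 0 < a := inv_pos.mpr hα₁pos
  have hbpos : 0 < b := inv_pos.mpr hα₂pos
  set N : Matrix (Fin d) (Fin d) ℂ := (a : ℂ) • L + (b : ℂ) • K with hNdef
  have hNherm : N.IsHermitian := by
    have : Nᴴ = N := by
      rw [hNdef, Matrix.conjTranspose_add, Matrix.conjTranspose_smul,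
        Matrix.conjTranspose_smul, hLherm.eq, hKherm.eq, Complex.star_def,
        Complex.conj_ofReal, Complex.conj_ofReal]
    exact this
  have hexpN : expectation N ψ = a * F₁ + b * F₂ := by
    rw [hNdef, expectation_add, expectation_smul, expectation_smul, hexpL, hexpK]
  have hNN : N * N = ((a^2 : ℝ) : ℂ) • (L * L) + ((b^2 : ℝ) : ℂ) • (K * K) := by
    have hKL : K * L = -(L * K) := by
      rw [hanti, neg_neg]
    rw [hNdef]
    rw [add_mul, mul_add, mul_add]
    rw [smul_mul_assoc, smul_mul_assoc, smul_mul_assoc, smul_mul_assoc,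
      mul_smul_comm, mul_smul_comm, mul_smul_comm, mul_smul_comm]
    rw [hKL]
    push_cast
    module
  have hquadN : (expectation N ψ) ^ 2 ≤ a^2 * (F₁ * α₁) + b^2 * (F₂ * α₂) := by
    have h1 := expectation_sq_le N ψ hψ
    rw [hNherm.eq, hNN] at h1
    have h2 : (star ψ ⬝ᵥ ((((a^2 : ℝ) : ℂ) • (L * L) + ((b^2 : ℝ) : ℂ) • (K * K)) *ᵥ ψ)).re
        = a^2 * (star ψ ⬝ᵥ ((L * L) *ᵥ ψ)).re + b^2 * (star ψ ⬝ᵥ ((K * K) *ᵥ ψ)).re := by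
      rw [Matrix.add_mulVec, dotProduct_add, Complex.add_re, smul_mulVec,
        smul_mulVec, dotProduct_smul, dotProduct_smul, smul_eq_mul, smul_eq_mul,
        Complex.re_ofReal_mul, Complex.re_ofReal_mul]
    rw [h2] at h1
    calc (expectation N ψ) ^ 2
        ≤ a^2 * (star ψ ⬝ᵥ ((L * L) *ᵥ ψ)).re + b^2 * (star ψ ⬝ᵥ ((K * K) *ᵥ ψ)).re := h1
      _ ≤ a^2 * (F₁ * α₁) + b^2 * (F₂ * α₂) := by
          apply add_le_add
          · exact mul_le_mul_of_nonneg_left hL2 (sq_nonneg a)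
          · exact mul_le_mul_of_nonneg_left hK2 (sq_nonneg b)
  set t : ℝ := a * F₁ + b * F₂ with htdef
  have hteq : a^2 * (F₁ * α₁) + b^2 * (F₂ * α₂) = t := by
    have ha1 : a * α₁ = 1 := inv_mul_cancel₀ hα₁pos.ne'
    have hb1 : b * α₂ = 1 := inv_mul_cancel₀ hα₂pos.ne'
    rw [htdef]
    linear_combination (a * F₁) * ha1 + (b * F₂) * hb1
  have htsq : t ^ 2 ≤ t := by
    rw [hexpN] at hquadN
    calc t ^ 2 ≤ a^2 * (F₁ * α₁) + b^2 * (F₂ * α₂) := hquadN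
      _ = t := hteq
  have htpos : 0 < t := add_pos (mul_pos hapos hF₁pos) (mul_pos hbpos hF₂pos)
  have ht1 : t ≤ 1 := by nlinarith
  have hmaxpos : 0 ≤ max α₁ α₂ := le_trans (le_of_lt hα₁pos) (le_max_left _ _)
  calc F₁ + F₂ = α₁ * (a * F₁) + α₂ * (b * F₂) := by
        have ha1 : α₁ * a = 1 := mul_inv_cancel₀ hα₁pos.ne'
        have hb1 : α₂ * b = 1 := mul_inv_cancel₀ hα₂pos.ne'
        linear_combination (-F₁) * ha1 + (-F₂) * hb1
    _ ≤ max α₁ α₂ * (a * F₁) + max α₁ α₂ * (b * F₂) := by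
        apply add_le_add
        · exact mul_le_mul_of_nonneg_right (le_max_left _ _)
            (le_of_lt (mul_pos hapos hF₁pos))
        · exact mul_le_mul_of_nonneg_right (le_max_right _ _)
            (le_of_lt (mul_pos hbpos hF₂pos))
    _ = max α₁ α₂ * t := by rw [htdef]; ring
    _ ≤ max α₁ α₂ * 1 := mul_le_mul_of_nonneg_left ht1 hmaxpos
    _ = max α₁ α₂ := mul_one _

end main

end HbarJoinAux

/-- The join (fully connected disjoint union) of two ħ-perfect graphs is ħ-perfect. -/
theorem stmt_2 {V₁ V₂ : Type*} [Fintype V₁] [Fintype V₂]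
    (G₁ : SimpleGraph V₁) (G₂ : SimpleGraph V₂) (G : SimpleGraph (V₁ ⊕ V₂))
    (hll : ∀ a b, G.Adj (Sum.inl a) (Sum.inl b) ↔ G₁.Adj a b)
    (hrr : ∀ a b, G.Adj (Sum.inr a) (Sum.inr b) ↔ G₂.Adj a b)
    (hlr : ∀ a b, G.Adj (Sum.inl a) (Sum.inr b))
    (h₁ : HbarPerfect G₁) (h₂ : HbarPerfect G₂) :
    HbarPerfect G := by
  intro d hd S hS w hw
  classical
  have hS₁ := HbarJoinAux.isRealization_inl hll hS
  have hS₂ := HbarJoinAux.isRealization_inr hrr hS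
  have hw₁ : ∀ i, 0 ≤ (w ∘ Sum.inl) i := fun i => hw _
  have hw₂ : ∀ j, 0 ≤ (w ∘ Sum.inr) j := fun j => hw _
  have halpha : alphaW G w = max (alphaW G₁ (w ∘ Sum.inl)) (alphaW G₂ (w ∘ Sum.inr)) :=
    HbarJoinAux.alphaW_join G₁ G₂ G hll hrr hlr w
  rw [halpha]
  apply le_antisymm
  · apply csSup_le (HbarJoinAux.betaSet_nonempty hd S w)
    rintro r ⟨ψ, hψ, rfl⟩
    exact HbarJoinAux.main_bound hll hrr hlr h₁ h₂ hd hS hw hψ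
  · refine max_le ?_ ?_
    · rw [← h₁ d hd _ hS₁ (w ∘ Sum.inl) hw₁]
      apply csSup_le (HbarJoinAux.betaSet_nonempty hd _ (w ∘ Sum.inl))
      rintro r ⟨ψ, hψ, rfl⟩
      have hle : ∑ i, (w ∘ Sum.inl) i * (expectation (S (Sum.inl i)) ψ) ^ 2
          ≤ ∑ v, w v * (expectation (S v) ψ) ^ 2 := by
        rw [Fintype.sum_sum_type (fun v => w v * (expectation (S v) ψ) ^ 2)]
        exact le_add_of_nonneg_right
          (Finset.sum_nonneg fun j _ => mul_nonneg (hw _) (sq_nonneg _))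
      exact le_trans hle
        (le_csSup (HbarJoinAux.betaSet_bddAbove S hS hw) ⟨ψ, hψ, rfl⟩)
    · rw [← h₂ d hd _ hS₂ (w ∘ Sum.inr) hw₂]
      apply csSup_le (HbarJoinAux.betaSet_nonempty hd _ (w ∘ Sum.inr))
      rintro r ⟨ψ, hψ, rfl⟩
      have hle : ∑ j, (w ∘ Sum.inr) j * (expectation (S (Sum.inr j)) ψ) ^ 2
          ≤ ∑ v, w v * (expectation (S v) ψ) ^ 2 := by
        rw [Fintype.sum_sum_type (fun v => w v * (expectation (S v) ψ) ^ 2)]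
        exact le_add_of_nonneg_left
          (Finset.sum_nonneg fun i _ => mul_nonneg (hw _) (sq_nonneg _))
      exact le_trans hle
        (le_csSup (HbarJoinAux.betaSet_bddAbove S hS hw) ⟨ψ, hψ, rfl⟩)
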